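/- Define for n ∈ ℕ the Laurent polynomial a_n(q) := (−1)^n q^{n(n+3)/2 − 1} Σ_{k=1}^{n+1} q^{k²} [n+k choose 2k−1]_q (the n-th Habiro cyclotomic coefficient of the mirror of the (2,5)-torus knot). Let p ≥ 3 be an odd integer, let e_p be a primitive p-th root of unity in ℂ, and let m ≥ 1 be an integer. Then a_{mp}(e_p) = (−1)^m ( 1 + Σ_{ℓ=0}^{m−1} C(m+ℓ, 2ℓ) + e_p^{−1} · ( Σ_{ℓ=0}^{m−1} C(m+ℓ, 2ℓ+1) ) · Σ_{j=(p+1)/2}^{p−1} e_p^{j²} [j choose 2j−1−p]_{e_p} ), where C(·,·) is the ordinary binomial coefficient. -/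

import Mathlib

/-- Evaluation at `ζ : ℂ` of the Gaussian binomial coefficient `[n choose k]_q ∈ ℤ[q]`,
defined by the `q`-Pascal recursion, agreeing with
`∏_{i=1}^{k} (1−q^{n−k+i})/(1−q^i)` for `k ≤ n` and with `0` for `k > n`. -/
def qbinom : ℕ → ℕ → ℂ → ℂ
  | _, 0, _ => 1
  | 0, _ + 1, _ => 0
  | n + 1, k + 1, ζ => qbinom n k ζ + ζ ^ (k + 1) * qbinom n (k + 1) ζ

/-- The `n`-th Habiro cyclotomic coefficient of the mirror of the `(2,5)`-torus knot,
`a_n(q) = (−1)^n q^{n(n+3)/2 − 1} Σ_{k=1}^{n+1} q^{k²} [n+k choose 2k−1]_q`,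
evaluated at `ζ ≠ 0`. -/
noncomputable def aCoef (n : ℕ) (ζ : ℂ) : ℂ :=
  (-1) ^ n * ζ ^ (((n * (n + 3) / 2 : ℕ) : ℤ) - 1) *
    ∑ k ∈ Finset.Icc 1 (n + 1), ζ ^ (k ^ 2) * qbinom (n + k) (2 * k - 1) ζ

lemma qbinom_zero_right (n : ℕ) (ζ : ℂ) : qbinom n 0 ζ = 1 := by
  cases n <;> rfl

lemma qbinom_succ (n k : ℕ) (ζ : ℂ) :
    qbinom (n+1) (k+1) ζ = qbinom n k ζ + ζ ^ (k + 1) * qbinom n (k + 1) ζ := rfl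

lemma qbinom_eq_zero {n k : ℕ} (h : n < k) (ζ : ℂ) : qbinom n k ζ = 0 := by
  induction n generalizing k with
  | zero => obtain ⟨k, rfl⟩ := Nat.exists_eq_add_of_lt h; rfl
  | succ n ih =>
    obtain ⟨k, rfl⟩ : ∃ j, k = j + 1 := ⟨k - 1, by omega⟩
    rw [qbinom_succ, ih (by omega), ih (by omega), mul_zero, add_zero]

lemma qbinom_self (n : ℕ) (ζ : ℂ) : qbinom n n ζ = 1 := by
  induction n with
  | zero => rfl
  | succ n ih => rw [qbinom_succ, ih, qbinom_eq_zero (by omega), mul_zero, add_zero]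

lemma qbinom_pascal2 (n k : ℕ) (ζ : ℂ) :
    qbinom (n+1) (k+1) ζ = ζ ^ (n - k) * qbinom n k ζ + qbinom n (k+1) ζ := by
  induction n generalizing k with
  | zero =>
    cases k with
    | zero => simp [qbinom]
    | succ k =>
      rw [qbinom_eq_zero (by omega), qbinom_eq_zero (by omega),
        qbinom_eq_zero (show (0:ℕ) < k+1+1 by omega)]
      ring
  | succ n ih =>
    cases k with
    | zero =>
      have h1 := qbinom_succ (n+1) 0 ζ
      have h2 := ih 0
      have h5 := qbinom_succ n 0 ζ
      rw [qbinom_zero_right] at *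
      rw [Nat.sub_zero] at *
      linear_combination h1 + ζ * h2 - h5
    | succ k =>
      rcases le_or_gt (k+1) n with hk | hk
      · obtain ⟨a, ha⟩ : ∃ a, n - (k+1) = a := ⟨_, rfl⟩
        have ha' : n - k = a + 1 := by omega
        have h1 := qbinom_succ (n+1) (k+1) ζ
        have h2 := ih k; rw [ha'] at h2
        have h3 := ih (k+1); rw [ha] at h3
        have h4 := qbinom_succ n (k+1) ζ
        have h5 := qbinom_succ n k ζ
        rw [show n + 1 - (k+1) = a + 1 by omega]
        linear_combination h1 + h2 + ζ^(k+2) * h3 - ζ^(a+1) * h5 - h4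
      · rcases eq_or_lt_of_le (show n ≤ k by omega) with hk' | hk'
        · subst hk'
          rw [qbinom_self, qbinom_self, qbinom_eq_zero (show n+1 < n+1+1 by omega),
            show n+1 - (n+1) = 0 by omega]
          ring
        · rw [qbinom_eq_zero (show n+1+1 < k+1+1 by omega),
            qbinom_eq_zero (show n+1 < k+1 by omega),
            qbinom_eq_zero (show n+1 < k+1+1 by omega)]
          ring

lemma qbinom_step (n k : ℕ) (ζ : ℂ) :
    (1 - ζ ^ (n - k)) * qbinom n k ζ = (1 - ζ ^ (k+1)) * qbinom n (k+1) ζ := by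
  linear_combination qbinom_pascal2 n k ζ - qbinom_succ n k ζ

lemma pow_cpd {p : ℕ} {e : ℂ} (hep : e ^ p = 1) (c d : ℕ) : e ^ (c * p + d) = e ^ d := by
  rw [pow_add, pow_mul', hep, one_pow, one_mul]

lemma mul_dec {p c : ℕ} (hp : 1 ≤ p) (hc : 1 ≤ c) :
    c * p + 0 = ((c-1) * p + (p-1)) + 1 := by
  obtain ⟨c', rfl⟩ : ∃ c', c = c' + 1 := ⟨c-1, by omega⟩
  rw [add_mul, one_mul, Nat.add_sub_cancel]
  omega

lemma qbinom_p_row {p : ℕ} {e : ℂ} (he : IsPrimitiveRoot e p) (hp2 : 2 ≤ p)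
    {d : ℕ} (hd1 : 1 ≤ d) (hdp : d < p) : qbinom p d e = 0 := by
  induction d with
  | zero => omega
  | succ d ih =>
    have hne : (1 : ℂ) - e ^ (d+1) ≠ 0 := by
      intro hc
      exact he.pow_ne_one_of_pos_of_lt (by omega) hdp (by linear_combination -hc)
    rcases Nat.eq_zero_or_pos d with rfl | hd
    · have h := qbinom_step p 0 e
      rw [Nat.sub_zero, he.pow_eq_one, sub_self, zero_mul] at h
      exact (mul_eq_zero.mp h.symm).resolve_left hne
    · have h := qbinom_step p d e
      rw [ih (by omega) (by omega), mul_zero] at h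
      exact (mul_eq_zero.mp h.symm).resolve_left hne

lemma qlucas {p : ℕ} {e : ℂ} (he : IsPrimitiveRoot e p) (hp2 : 2 ≤ p) :
    ∀ a b c d : ℕ, b < p → d < p →
      qbinom (a * p + b) (c * p + d) e = (a.choose c : ℂ) * qbinom b d e := by
  have hep := he.pow_eq_one
  intro a
  induction a with
  | zero =>
    intro b c d hb hd
    cases c with
    | zero => simp
    | succ c =>
      rw [qbinom_eq_zero (show 0 * p + b < (c+1) * p + d by nlinarith) e]
      simp [Nat.choose_eq_zero_of_lt]
  | succ a iha =>
    intro b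
    induction b with
    | zero =>
      intro c d _ hd
      rcases Nat.eq_zero_or_pos d with rfl | hd1
      · rcases Nat.eq_zero_or_pos c with rfl | hc1
        · simp [qbinom_zero_right]
        · rw [show (a+1) * p + 0 = (a * p + (p-1)) + 1 by rw [add_mul, one_mul]; omega,
            mul_dec (by omega) hc1, qbinom_succ,
            iha (p-1) (c-1) (p-1) (by omega) (by omega),
            show (c-1) * p + (p-1) + 1 = c * p + 0 from (mul_dec (by omega) hc1).symm,
            pow_cpd hep c 0,
            iha (p-1) c 0 (by omega) (by omega),
            qbinom_self, qbinom_zero_right, qbinom_zero_right]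
          have hch : (a+1).choose c = a.choose (c-1) + a.choose c := by
            obtain ⟨c', rfl⟩ : ∃ c', c = c' + 1 := ⟨c-1, by omega⟩
            simp [Nat.choose_succ_succ]
          rw [hch]
          push_cast
          ring
      · rw [show (a+1) * p + 0 = (a * p + (p-1)) + 1 by rw [add_mul, one_mul]; omega,
          show c * p + d = (c * p + (d-1)) + 1 by omega, qbinom_succ,
          iha (p-1) c (d-1) (by omega) (by omega),
          show c * p + (d-1) + 1 = c * p + d by omega,
          pow_cpd hep c d,
          iha (p-1) c d (by omega) (by omega),
          qbinom_eq_zero (show 0 < d by omega) e, mul_zero]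
        have key : qbinom (p-1) (d-1) e + e ^ d * qbinom (p-1) d e = qbinom p d e := by
          conv_rhs => rw [show p = (p-1) + 1 by omega, show d = (d-1) + 1 by omega, qbinom_succ]
          rw [show d - 1 + 1 = d by omega]
        calc (a.choose c : ℂ) * qbinom (p-1) (d-1) e + e ^ d * ((a.choose c : ℂ) * qbinom (p-1) d e)
            = (a.choose c : ℂ) * (qbinom (p-1) (d-1) e + e ^ d * qbinom (p-1) d e) := by ring
          _ = (a.choose c : ℂ) * qbinom p d e := by rw [key]
          _ = 0 := by rw [qbinom_p_row he hp2 hd1 hd, mul_zero]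
    | succ b ihb =>
      intro c d hb hd
      rcases Nat.eq_zero_or_pos d with rfl | hd1
      · rcases Nat.eq_zero_or_pos c with rfl | hc1
        · simp [qbinom_zero_right]
        · rw [show (a+1) * p + (b+1) = ((a+1) * p + b) + 1 by omega,
            mul_dec (by omega) hc1, qbinom_succ,
            ihb (c-1) (p-1) (by omega) (by omega),
            show (c-1) * p + (p-1) + 1 = c * p + 0 from (mul_dec (by omega) hc1).symm,
            pow_cpd hep c 0,
            ihb c 0 (by omega) (by omega),
            qbinom_eq_zero (show b < p-1 by omega) e,
            qbinom_zero_right, qbinom_zero_right]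
          ring
      · rw [show (a+1) * p + (b+1) = ((a+1) * p + b) + 1 by omega,
          show c * p + d = (c * p + (d-1)) + 1 by omega, qbinom_succ,
          ihb c (d-1) (by omega) (by omega),
          show c * p + (d-1) + 1 = c * p + d by omega,
          pow_cpd hep c d,
          ihb c d (by omega) (by omega)]
        conv_rhs => rw [show d = (d-1) + 1 by omega, qbinom_succ, show d - 1 + 1 = d by omega]
        ring

lemma sum_grid (f : ℕ → ℂ) (m p : ℕ) :
    ∑ k ∈ Finset.Icc 1 (m*p), f k
      = ∑ l ∈ Finset.range m, ∑ r ∈ Finset.Icc 1 p, f (l*p + r) := by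
  induction m with
  | zero => simp
  | succ m ih =>
    rw [Finset.sum_range_succ, ← ih]
    have h1 : Finset.Icc 1 (m*p) = Finset.Ioc 0 (m*p) := Finset.Icc_add_one_left_eq_Ioc 0 _
    have h2 : Finset.Icc 1 ((m+1)*p) = Finset.Ioc 0 ((m+1)*p) := Finset.Icc_add_one_left_eq_Ioc 0 _
    have h3 : Finset.Icc 1 p = Finset.Ioc 0 p := Finset.Icc_add_one_left_eq_Ioc 0 _
    rw [h1, h2, h3,
      ← Finset.sum_Ioc_consecutive f (Nat.zero_le (m*p)) (by nlinarith : m*p ≤ (m+1)*p)]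
    congr 1
    have h4 : Finset.Ioc (m*p) ((m+1)*p) = (Finset.Ioc 0 p).map (addLeftEmbedding (m*p)) := by
      rw [Finset.map_add_left_Ioc, add_zero]
      congr 1
      ring
    rw [h4, Finset.sum_map]
    apply Finset.sum_congr rfl
    intro x _
    rw [addLeftEmbedding_apply]

theorem stmt18 (p : ℕ) (hp : 3 ≤ p) (hodd : Odd p) (e : ℂ) (he : IsPrimitiveRoot e p)
    (m : ℕ) (hm : 1 ≤ m) :
    aCoef (m * p) e =
      (-1) ^ m * (1 + ∑ l ∈ Finset.range m, ((m + l).choose (2 * l) : ℂ) +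
        e⁻¹ * (∑ l ∈ Finset.range m, ((m + l).choose (2 * l + 1) : ℂ)) *
          ∑ j ∈ Finset.Icc ((p + 1) / 2) (p - 1),
            e ^ (j ^ 2) * qbinom j (2 * j - 1 - p) e) := by
  have hp2 : 2 ≤ p := by omega
  have hpm : p % 2 = 1 := Nat.odd_iff.mp hodd
  have hep : e ^ p = 1 := he.pow_eq_one
  have he0 : e ≠ 0 := he.ne_zero (by omega)
  set T : ℂ := ∑ j ∈ Finset.Icc ((p + 1) / 2) (p - 1),
      e ^ (j ^ 2) * qbinom j (2 * j - 1 - p) e with hT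
  -- pointwise evaluation on the grid
  have hpoint : ∀ l : ℕ, ∀ r ∈ Finset.Icc 1 p,
      e ^ ((l*p+r) ^ 2) * qbinom (m * p + (l*p+r)) (2 * (l*p+r) - 1) e
        = (if r = 1 then e * ((m+l).choose (2*l) : ℂ) else 0)
          + ((m+l).choose (2*l+1) : ℂ) *
              (if r ∈ Finset.Icc ((p+1)/2) (p-1) then e ^ (r^2) * qbinom r (2*r-1-p) e else 0) := by
    intro l r hr
    rw [Finset.mem_Icc] at hr
    rw [show (l*p+r)^2 = (l*l*p + 2*l*r) * p + r^2 by ring, pow_cpd hep]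
    rcases eq_or_ne r p with hrp | hrp
    · rw [hrp]
      rw [show m * p + (l*p+p) = (m+l+1) * p + 0 by ring,
        show 2 * (l*p+p) - 1 = (2*l+1) * p + (p-1) by
          have h1 : (2*l+1) * p = 2*(l*p) + p := by ring
          omega,
        qlucas he hp2 (m+l+1) 0 (2*l+1) (p-1) (by omega) (by omega),
        qbinom_eq_zero (show 0 < p-1 by omega) e]
      rw [if_neg (by omega), if_neg (by rw [Finset.mem_Icc]; omega)]
      ring
    · rw [show m * p + (l*p+r) = (m+l) * p + r by ring]
      rcases eq_or_ne r 1 with rfl | hr1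
      · rw [show 2 * (l*p+1) - 1 = (2*l) * p + 1 by
            have h1 : (2*l) * p = 2*(l*p) := by ring
            omega,
          qlucas he hp2 (m+l) 1 (2*l) 1 (by omega) (by omega), qbinom_self]
        rw [if_pos rfl, if_neg (by rw [Finset.mem_Icc]; omega)]
        ring
      · rcases lt_or_ge r ((p+1)/2) with hcase | hcase
        · rw [show 2 * (l*p+r) - 1 = (2*l) * p + (2*r-1) by
              have h1 : (2*l) * p = 2*(l*p) := by ring
              omega,
            qlucas he hp2 (m+l) r (2*l) (2*r-1) (by omega) (by omega),
            qbinom_eq_zero (show r < 2*r-1 by omega) e]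
          rw [if_neg hr1, if_neg (by rw [Finset.mem_Icc]; omega)]
          ring
        · rw [show 2 * (l*p+r) - 1 = (2*l+1) * p + (2*r-1-p) by
              have h1 : (2*l+1) * p = 2*(l*p) + p := by ring
              omega,
            qlucas he hp2 (m+l) r (2*l+1) (2*r-1-p) (by omega) (by omega)]
          rw [if_neg hr1, if_pos (by rw [Finset.mem_Icc]; omega)]
          ring
  -- row sums
  have hsum1 : ∀ l : ℕ,
      (∑ r ∈ Finset.Icc 1 p,
        e ^ ((l*p+r) ^ 2) * qbinom (m * p + (l*p+r)) (2 * (l*p+r) - 1) e)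
      = e * ((m+l).choose (2*l) : ℂ) + ((m+l).choose (2*l+1) : ℂ) * T := by
    intro l
    rw [Finset.sum_congr rfl (hpoint l), Finset.sum_add_distrib]
    congr 1
    · rw [Finset.sum_ite_eq' (Finset.Icc 1 p) 1 (fun _ => e * ((m+l).choose (2*l) : ℂ)),
        if_pos (by rw [Finset.mem_Icc]; omega)]
    · rw [← Finset.mul_sum]
      congr 1
      rw [Finset.sum_ite_mem,
        Finset.inter_eq_right.mpr (Finset.Icc_subset_Icc (by omega) (by omega))]
  -- total sum
  have hS : (∑ k ∈ Finset.Icc 1 (m*p+1),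
        e ^ (k ^ 2) * qbinom (m * p + k) (2 * k - 1) e)
      = e * (1 + ∑ l ∈ Finset.range m, ((m+l).choose (2*l) : ℂ))
        + (∑ l ∈ Finset.range m, ((m+l).choose (2*l+1) : ℂ)) * T := by
    rw [Finset.sum_Icc_succ_top (by omega)
        (fun k => e ^ (k ^ 2) * qbinom (m * p + k) (2 * k - 1) e),
      sum_grid (fun k => e ^ (k ^ 2) * qbinom (m * p + k) (2 * k - 1) e) m p]
    have htop : e ^ ((m*p+1) ^ 2) * qbinom (m * p + (m*p+1)) (2 * (m*p+1) - 1) e = e := by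
      rw [show (m*p+1)^2 = (m*m*p + 2*m) * p + 1 by ring, pow_cpd hep,
        show m * p + (m*p+1) = 2*(m*p) + 1 by ring,
        show 2 * (m*p+1) - 1 = 2*(m*p) + 1 by omega,
        qbinom_self, pow_one, mul_one]
    rw [htop, Finset.sum_congr rfl (fun l _ => hsum1 l), Finset.sum_add_distrib,
      ← Finset.sum_mul, mul_add, mul_one]
    rw [Finset.mul_sum (Finset.range m) (fun l => (((m+l).choose (2*l) : ℕ) : ℂ)) e]
    ring
  -- the prefactor
  have hsign : ((-1 : ℂ)) ^ (m*p) = (-1) ^ m := by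
    rw [pow_mul', hodd.neg_one_pow]
  have hdvd : p ∣ (m*p) * ((m*p) + 3) / 2 := by
    have h2 : 2 ∣ m * (m*p + 3) := by
      rcases Nat.even_or_odd m with hme | hmo
      · exact Dvd.dvd.mul_right hme.two_dvd _
      · have : Even (m*p + 3) := by
          have hmp : Odd (m*p) := hmo.mul hodd
          exact hmp.add_odd (by decide)
        exact Dvd.dvd.mul_left this.two_dvd _
    obtain ⟨u, hu⟩ := h2
    refine ⟨u, ?_⟩
    have : (m*p) * ((m*p) + 3) = 2 * (p * u) := by
      calc (m*p) * ((m*p) + 3) = p * (m * (m*p+3)) := by ring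
        _ = p * (2*u) := by rw [hu]
        _ = 2 * (p*u) := by ring
    omega
  have hzpow : e ^ ((((m*p) * ((m*p) + 3) / 2 : ℕ) : ℤ) - 1) = e⁻¹ := by
    obtain ⟨t, ht⟩ := hdvd
    rw [zpow_sub₀ he0, zpow_one, zpow_natCast, ht, pow_mul, hep, one_pow, one_div]
  rw [aCoef, hS, hsign, hzpow]
  rw [hT]
  field_simp
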